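/- (No full revelation.) Assume d_A ≠ 0 and d_B ≠ 0, and for α_B ∈ [0,1) let α_A*(α_B) denote the unique minimizer of L_A(·, α_B) on [0,1). Then sup over α_B ∈ [0,1) of α_A*(α_B) is strictly less than 1; in fact, if f_A(0) < 2 + |d_B/d_A| then α_A*(α_B) ≤ ᾱ for all α_B, where ᾱ ∈ (0,1) is the unique solution of f_A(ᾱ) = 2 + |d_B/d_A|, and otherwise α_A*(α_B) = 0 for all α_B. -/

import Mathlib

open Set Filter

/-- Team decision formed by the two digital representatives. -/
noncomputable def teamDec (lam : ℝ → ℝ) (thA thB mu : ℝ) (aA aB : ℝ) : ℝ :=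
  (lam aA * thA + (1 - lam aA) * mu + lam aB * thB + (1 - lam aB) * mu) / 2

/-- Alice's total loss: preference loss plus communication cost. -/
noncomputable def lossA (lam c : ℝ → ℝ) (thA thB mu : ℝ) (aA aB : ℝ) : ℝ :=
  (thA - teamDec lam thA thB mu aA aB) ^ 2 + c aA

/-- Bob's total loss: preference loss plus communication cost. -/
noncomputable def lossB (lam c : ℝ → ℝ) (thA thB mu : ℝ) (aA aB : ℝ) : ℝ :=
  (thB - teamDec lam thA thB mu aA aB) ^ 2 + c aB

/-- The function `f_m(α) = λ(α) + (2/d_m²)·c'(α)/λ'(α)`. -/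
noncomputable def fFun (lam lam' c' : ℝ → ℝ) (d : ℝ) (α : ℝ) : ℝ :=
  lam α + (2 / d ^ 2) * (c' α / lam' α)

/-- The function `h_m(α) = 2 − λ(α)·d_{−m}/d_m`. -/
noncomputable def hFun (lam : ℝ → ℝ) (dm dOther : ℝ) (α : ℝ) : ℝ :=
  2 - lam α * dOther / dm

/-- `a` is a best response of Alice to Bob's revelation `aB`:
it minimizes `α ↦ L_A(α, aB)` over `[0,1)`. -/
def IsBestRespA (lam c : ℝ → ℝ) (thA thB mu : ℝ) (a aB : ℝ) : Prop :=
  a ∈ Set.Ico (0:ℝ) 1 ∧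
    ∀ x ∈ Set.Ico (0:ℝ) 1, lossA lam c thA thB mu a aB ≤ lossA lam c thA thB mu x aB

/-- Nash equilibrium of the digital representative game. -/
def IsNashEq (lam c : ℝ → ℝ) (thA thB mu : ℝ) (aA aB : ℝ) : Prop :=
  aA ∈ Set.Ico (0:ℝ) 1 ∧ aB ∈ Set.Ico (0:ℝ) 1 ∧
  (∀ α ∈ Set.Ico (0:ℝ) 1, lossA lam c thA thB mu aA aB ≤ lossA lam c thA thB mu α aB) ∧
  (∀ α ∈ Set.Ico (0:ℝ) 1, lossB lam c thA thB mu aA aB ≤ lossB lam c thA thB mu aA α)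

/-- No full revelation. The supremum of Alice's best responses over all
`α_B ∈ [0,1)` is strictly less than `1`; in fact her best responses are bounded by the unique
interior solution of `f_A(ᾱ) = 2 + |d_B/d_A|` when `f_A(0) < 2 + |d_B/d_A|`, and are `0`
otherwise. -/
theorem bestRespA_no_full_revelation
    (lam lam' c c' : ℝ → ℝ)
    (hlamDeriv : ∀ α ∈ Set.Icc (0:ℝ) 1, HasDerivAt lam (lam' α) α)
    (hlam'Cont : ContinuousOn lam' (Set.Icc (0:ℝ) 1))
    (hlam0 : lam 0 = 0) (hlam1 : lam 1 = 1)
    (hlam'pos : ∀ α ∈ Set.Icc (0:ℝ) 1, 0 < lam' α)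
    (hlam'anti : ∀ x ∈ Set.Icc (0:ℝ) 1, ∀ y ∈ Set.Icc (0:ℝ) 1, x ≤ y → lam' y ≤ lam' x)
    (hcDeriv : ∀ α ∈ Set.Ico (0:ℝ) 1, HasDerivAt c (c' α) α)
    (hc'Cont : ContinuousOn c' (Set.Ico (0:ℝ) 1))
    (hc0 : c 0 = 0)
    (hc'nonneg : ∀ α ∈ Set.Ico (0:ℝ) 1, 0 ≤ c' α)
    (hc'strictMono : ∀ x ∈ Set.Ico (0:ℝ) 1, ∀ y ∈ Set.Ico (0:ℝ) 1, x < y → c' x < c' y)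
    (hc'top : Filter.Tendsto c' (nhdsWithin 1 (Set.Iio 1)) Filter.atTop)
    (thA thB muG dA dB : ℝ)
    (hdA : dA = thA - muG) (hdB : dB = thB - muG)
    (hdAne : dA ≠ 0) (hdBne : dB ≠ 0) :
    (∃ u < (1:ℝ), ∀ aB ∈ Set.Ico (0:ℝ) 1, ∀ a, IsBestRespA lam c thA thB muG a aB → a ≤ u) ∧
    (fFun lam lam' c' dA 0 < 2 + |dB / dA| →
      (∃! ab, ab ∈ Set.Ioo (0:ℝ) 1 ∧ fFun lam lam' c' dA ab = 2 + |dB / dA|) ∧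
      ∀ ab, ab ∈ Set.Ioo (0:ℝ) 1 ∧ fFun lam lam' c' dA ab = 2 + |dB / dA| →
        ∀ aB ∈ Set.Ico (0:ℝ) 1, ∀ a, IsBestRespA lam c thA thB muG a aB → a ≤ ab) ∧
    (2 + |dB / dA| ≤ fFun lam lam' c' dA 0 →
      ∀ aB ∈ Set.Ico (0:ℝ) 1, ∀ a, IsBestRespA lam c thA thB muG a aB → a = 0) := by
  have hIcoIcc : Set.Ico (0:ℝ) 1 ⊆ Set.Icc 0 1 := Set.Ico_subset_Icc_self
  have h0Icc : (0:ℝ) ∈ Set.Icc (0:ℝ) 1 := ⟨le_refl _, by norm_num⟩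
  have h0Ico : (0:ℝ) ∈ Set.Ico (0:ℝ) 1 := ⟨le_refl _, by norm_num⟩
  have hlamCont : ContinuousOn lam (Set.Icc (0:ℝ) 1) :=
    fun x hx => (hlamDeriv x hx).continuousAt.continuousWithinAt
  have hlamMono : StrictMonoOn lam (Set.Icc (0:ℝ) 1) := by
    apply strictMonoOn_of_deriv_pos (convex_Icc 0 1) hlamCont
    intro x hx
    rw [interior_Icc] at hx
    rw [(hlamDeriv x (Set.Ioo_subset_Icc_self hx)).deriv]
    exact hlam'pos x (Set.Ioo_subset_Icc_self hx)
  set K := 2 + |dB / dA| with hK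
  clear_value K
  have hdA2 : (0:ℝ) < dA ^ 2 := by positivity
  have habspos : (0:ℝ) < |dB / dA| := abs_pos.mpr (div_ne_zero hdBne hdAne)
  have hlam_nonneg : ∀ x ∈ Set.Ico (0:ℝ) 1, 0 ≤ lam x := by
    intro x hx
    rcases eq_or_lt_of_le hx.1 with h | h
    · rw [← h, hlam0]
    · have := hlamMono h0Icc (hIcoIcc hx) h
      linarith [hlam0.ge, hlam0.le]
  have hlam_lt_one : ∀ x ∈ Set.Ico (0:ℝ) 1, lam x < 1 := by
    intro x hx
    have := hlamMono (hIcoIcc hx) ⟨by norm_num, le_refl _⟩ hx.2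
    linarith [hlam1.le]
  -- strict monotonicity of fFun on Ico
  have hfmono : ∀ x ∈ Set.Ico (0:ℝ) 1, ∀ y ∈ Set.Ico (0:ℝ) 1, x < y →
      fFun lam lam' c' dA x < fFun lam lam' c' dA y := by
    intro x hx y hy hxy
    have h1 : lam x < lam y := hlamMono (hIcoIcc hx) (hIcoIcc hy) hxy
    have hlx := hlam'pos x (hIcoIcc hx)
    have hly := hlam'pos y (hIcoIcc hy)
    have hcx := hc'nonneg x hx
    have hcy : c' x < c' y := hc'strictMono x hx y hy hxy
    have hll : lam' y ≤ lam' x := hlam'anti x (hIcoIcc hx) y (hIcoIcc hy) hxy.le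
    have h2 : c' x / lam' x < c' y / lam' y := by
      gcongr
      exact le_trans hcx hcy.le
    unfold fFun
    have h3 : (2 / dA ^ 2) * (c' x / lam' x) < (2 / dA ^ 2) * (c' y / lam' y) := by
      apply mul_lt_mul_of_pos_left h2
      positivity
    linarith
  -- continuity of fFun on Ico
  have hfCont : ContinuousOn (fFun lam lam' c' dA) (Set.Ico 0 1) := by
    unfold fFun
    apply ContinuousOn.add (hlamCont.mono hIcoIcc)
    apply ContinuousOn.mul continuousOn_const
    exact hc'Cont.div (hlam'Cont.mono hIcoIcc)
      (fun x hx => ne_of_gt (hlam'pos x (hIcoIcc hx)))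
  -- first order condition for interior best responses
  have hkey : ∀ aB ∈ Set.Ico (0:ℝ) 1, ∀ a, IsBestRespA lam c thA thB muG a aB → 0 < a →
      fFun lam lam' c' dA a = 2 - lam aB * dB / dA := by
    intro aB haB a hbr hapos
    obtain ⟨haI, hmin⟩ := hbr
    have haIcc := hIcoIcc haI
    have hl := hlamDeriv a haIcc
    have hcd := hcDeriv a haI
    have hinner : HasDerivAt (fun α => thA - teamDec lam thA thB muG α aB)
        (-(lam' a * dA) / 2) a := by
      have h1 : HasDerivAt (fun α => teamDec lam thA thB muG α aB) (lam' a * dA / 2) a := by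
        unfold teamDec
        have h2 := ((((hl.mul_const thA).add
          (((hasDerivAt_const a (1:ℝ)).sub hl).mul_const muG)).add_const
          (lam aB * thB)).add_const ((1 - lam aB) * muG)).div_const 2
        refine h2.congr_deriv ?_
        subst hdA; ring
      have h4 := (hasDerivAt_const a thA).sub h1
      refine h4.congr_deriv ?_
      ring
    have hloss : HasDerivAt (fun α => lossA lam c thA thB muG α aB)
        (2 * (thA - teamDec lam thA thB muG a aB) * (-(lam' a * dA) / 2) + c' a) a := by
      have h5 := (hinner.pow 2).add hcd
      unfold lossA
      refine h5.congr_deriv ?_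
      ring
    have hloc : IsLocalMin (fun α => lossA lam c thA thB muG α aB) a := by
      have hmem : Set.Ico (0:ℝ) 1 ∈ nhds a :=
        mem_nhds_iff.mpr ⟨Set.Ioo 0 1, Set.Ioo_subset_Ico_self, isOpen_Ioo, ⟨hapos, haI.2⟩⟩
      exact Filter.eventually_of_mem hmem (fun x hx => hmin x hx)
    have hzero := hloc.hasDerivAt_eq_zero hloss
    have hE : thA - teamDec lam thA thB muG a aB = dA - (lam a * dA + lam aB * dB) / 2 := by
      unfold teamDec; subst hdA; subst hdB; ring
    rw [hE] at hzero
    have hlpos := hlam'pos a haIcc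
    unfold fFun
    field_simp
    linear_combination 2 * hzero
  -- the FOC value is strictly below K
  have hlt : ∀ aB ∈ Set.Ico (0:ℝ) 1, 2 - lam aB * dB / dA < K := by
    intro aB haB
    have h1 : 0 ≤ lam aB := hlam_nonneg aB haB
    have h2 : lam aB < 1 := hlam_lt_one aB haB
    have h3 : -(lam aB * dB / dA) ≤ lam aB * |dB / dA| := by
      have h3' := neg_le_abs (lam aB * (dB / dA))
      rw [abs_mul, abs_of_nonneg h1] at h3'
      calc -(lam aB * dB / dA) = -(lam aB * (dB / dA)) := by ring
        _ ≤ lam aB * |dB / dA| := h3'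
    have h4 : lam aB * |dB / dA| < 1 * |dB / dA| := by
      exact mul_lt_mul_of_pos_right h2 habspos
    rw [hK]; linarith
  -- existence of solution of f = K when f 0 < K
  have hexists : fFun lam lam' c' dA 0 < K → ∃ b ∈ Set.Ioo (0:ℝ) 1,
      fFun lam lam' c' dA b = K := by
    intro h0
    have hKpos : 0 < K := by rw [hK]; linarith
    obtain ⟨b0, hb0c, hb0mem⟩ : ∃ b0, lam' 0 * ((K + 1) * dA ^ 2 / 2) ≤ c' b0 ∧
        b0 ∈ Set.Ioo (0:ℝ) 1 := by
      have h1 : ∀ᶠ x in nhdsWithin 1 (Set.Iio 1),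
          lam' 0 * ((K + 1) * dA ^ 2 / 2) ≤ c' x := hc'top.eventually_ge_atTop _
      have h2 : ∀ᶠ x in nhdsWithin 1 (Set.Iio 1), x ∈ Set.Ioo (0:ℝ) 1 :=
        Filter.eventually_of_mem (Ioo_mem_nhdsLT_of_mem ⟨one_pos, le_refl 1⟩) (fun x hx => hx)
      exact (h1.and h2).exists
    have hb0Ico : b0 ∈ Set.Ico (0:ℝ) 1 := ⟨hb0mem.1.le, hb0mem.2⟩
    have hl0 := hlam'pos 0 h0Icc
    have hlb0 := hlam'pos b0 (hIcoIcc hb0Ico)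
    have hll : lam' b0 ≤ lam' 0 := hlam'anti 0 h0Icc b0 (hIcoIcc hb0Ico) hb0mem.1.le
    have hfb0 : K < fFun lam lam' c' dA b0 := by
      have hM : (0:ℝ) ≤ lam' 0 * ((K + 1) * dA ^ 2 / 2) := by positivity
      have h5 : lam' 0 * ((K + 1) * dA ^ 2 / 2) / lam' 0 ≤ c' b0 / lam' b0 := by
        gcongr <;> first
          | exact hc'nonneg b0 hb0Ico
          | exact hb0c
          | exact hll
      have h6 : lam' 0 * ((K + 1) * dA ^ 2 / 2) / lam' 0 = (K + 1) * dA ^ 2 / 2 := by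
        field_simp
      rw [h6] at h5
      have h7 : (2 / dA ^ 2) * ((K + 1) * dA ^ 2 / 2) ≤ (2 / dA ^ 2) * (c' b0 / lam' b0) := by
        apply mul_le_mul_of_nonneg_left h5; positivity
      have h8 : (2 / dA ^ 2) * ((K + 1) * dA ^ 2 / 2) = K + 1 := by field_simp
      have h9 : 0 ≤ lam b0 := hlam_nonneg b0 hb0Ico
      unfold fFun
      linarith
    have hsub : Set.Icc (0:ℝ) b0 ⊆ Set.Ico 0 1 :=
      fun x hx => ⟨hx.1, lt_of_le_of_lt hx.2 hb0mem.2⟩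
    have hivt := intermediate_value_Ioo hb0mem.1.le (hfCont.mono hsub)
    obtain ⟨ab, habmem, habeq⟩ := hivt ⟨h0, hfb0⟩
    exact ⟨ab, ⟨habmem.1, habmem.2.trans hb0mem.2⟩, habeq⟩
  -- bound lemma
  have hbound : ∀ ab, ab ∈ Set.Ioo (0:ℝ) 1 ∧ fFun lam lam' c' dA ab = K →
      ∀ aB ∈ Set.Ico (0:ℝ) 1, ∀ a, IsBestRespA lam c thA thB muG a aB → a ≤ ab := by
    rintro ab ⟨habI, habeq⟩ aB haB a hbr
    have habIco : ab ∈ Set.Ico (0:ℝ) 1 := ⟨habI.1.le, habI.2⟩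
    rcases eq_or_lt_of_le hbr.1.1 with h | h
    · rw [← h]; exact habI.1.le
    · have hfa := hkey aB haB a hbr h
      have hlt1 : fFun lam lam' c' dA a < fFun lam lam' c' dA ab := by
        rw [hfa, habeq]; exact hlt aB haB
      by_contra hcon
      push_neg at hcon
      have := hfmono ab habIco a hbr.1 hcon
      linarith
  -- zero lemma
  have hzeroBR : K ≤ fFun lam lam' c' dA 0 →
      ∀ aB ∈ Set.Ico (0:ℝ) 1, ∀ a, IsBestRespA lam c thA thB muG a aB → a = 0 := by
    intro hge aB haB a hbr
    by_contra h
    have hpos : 0 < a := lt_of_le_of_ne hbr.1.1 (Ne.symm h)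
    have hfa := hkey aB haB a hbr hpos
    have h1 := hlt aB haB
    have h2 := hfmono 0 h0Ico a hbr.1 hpos
    linarith
  refine ⟨?_, ?_, hzeroBR⟩
  · by_cases h0 : fFun lam lam' c' dA 0 < K
    · obtain ⟨ab, habI, habeq⟩ := hexists h0
      exact ⟨ab, habI.2, hbound ab ⟨habI, habeq⟩⟩
    · exact ⟨0, one_pos, fun aB haB a hbr => le_of_eq (hzeroBR (not_lt.1 h0) aB haB a hbr)⟩
  · intro h0
    obtain ⟨ab, habI, habeq⟩ := hexists h0
    refine ⟨⟨ab, ⟨habI, habeq⟩, ?_⟩, hbound⟩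
    rintro y ⟨hyI, hyeq⟩
    have hyIco : y ∈ Set.Ico (0:ℝ) 1 := ⟨hyI.1.le, hyI.2⟩
    have habIco : ab ∈ Set.Ico (0:ℝ) 1 := ⟨habI.1.le, habI.2⟩
    rcases lt_trichotomy y ab with h | h | h
    · have := hfmono y hyIco ab habIco h; rw [hyeq, habeq] at this; linarith
    · exact h
    · have := hfmono ab habIco y hyIco h; rw [hyeq, habeq] at this; linarith
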